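/- Let n ≥ 1 and let φ be a unital bilinear map on ℂⁿ. Then the border rank of φ is at most n if and only if φ is smoothable, i.e., φ lies in the closure of the GL(ℂⁿ)-orbit {(x, y) ↦ g(μ(g⁻¹x, g⁻¹y)) : g ∈ GL(ℂⁿ)} of the coordinatewise multiplication μ(x, y) = (x₁y₁, …, xₙyₙ) of ℂⁿ. -/

import Mathlib

open scoped BigOperators

/-- The bilinear map induced by a structure-constant array `μ`. -/
noncomputable def mulOf {n : ℕ} (μ : Fin n → Fin n → Fin n → ℂ)
    (x y : Fin n → ℂ) : Fin n → ℂ :=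
  fun k => ∑ i, ∑ j, μ i j k * x i * y j

/-- A bilinear map is unital if it has a two-sided identity element. -/
def IsUnitalBil {n : ℕ} (μ : Fin n → Fin n → Fin n → ℂ) : Prop :=
  ∃ e : Fin n → ℂ, ∀ x : Fin n → ℂ, mulOf μ e x = x ∧ mulOf μ x e = x

/-- `T` is a sum of `r` decomposable tensors (i.e. has rank at most `r`). -/
def rankLE {n₁ n₂ n₃ : ℕ} (T : Fin n₁ → Fin n₂ → Fin n₃ → ℂ) (r : ℕ) : Prop :=
  ∃ u : Fin r → Fin n₁ → ℂ, ∃ v : Fin r → Fin n₂ → ℂ, ∃ w : Fin r → Fin n₃ → ℂ,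
    T = fun i j k => ∑ s, u s i * v s j * w s k

/-- The border rank of a tensor: the least `r` such that `T` is a limit of
tensors of rank at most `r`. -/
noncomputable def bRank {n₁ n₂ n₃ : ℕ} (T : Fin n₁ → Fin n₂ → Fin n₃ → ℂ) : ℕ :=
  sInf {r | T ∈ closure {S | rankLE S r}}

/-- Coordinatewise multiplication of `ℂⁿ` as a structure-constant array. -/
noncomputable def diagMul (n : ℕ) : Fin n → Fin n → Fin n → ℂ :=
  fun i j k => if i = j ∧ j = k then 1 else 0

/-- The `GL(ℂⁿ)`-orbit `{(x, y) ↦ g (μ (g⁻¹ x, g⁻¹ y)) : g ∈ GL(ℂⁿ)}` of the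
bilinear map `μ`, written in coordinates. -/
def BilOrbit {n : ℕ} (μ : Fin n → Fin n → Fin n → ℂ) :
    Set (Fin n → Fin n → Fin n → ℂ) :=
  {S | ∃ g : GL (Fin n) ℂ,
    S = fun i j k => ∑ a, ∑ b, ∑ c,
      (↑g⁻¹ : Matrix (Fin n) (Fin n) ℂ) a i *
      (↑g⁻¹ : Matrix (Fin n) (Fin n) ℂ) b j *
      (↑g : Matrix (Fin n) (Fin n) ℂ) k c * μ a b c}

namespace Stmt1Aux

open Matrix Filter

variable {n : ℕ}

lemma sum_diagMul (F : Fin n → Fin n → Fin n → ℂ) :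
    (∑ a, ∑ b, ∑ c, F a b c * diagMul n a b c) = ∑ c, F c c c := by
  simp [diagMul, ite_and, mul_ite, mul_one, mul_zero, Finset.sum_ite_eq, Finset.sum_ite_eq']

lemma orbit_subset_rank : BilOrbit (diagMul n) ⊆ {S | rankLE S n} := by
  rintro S ⟨g, rfl⟩
  refine ⟨fun s i => (↑g⁻¹ : Matrix (Fin n) (Fin n) ℂ) s i,
    fun s j => (↑g⁻¹ : Matrix (Fin n) (Fin n) ℂ) s j,
    fun s k => (↑g : Matrix (Fin n) (Fin n) ℂ) k s, ?_⟩
  funext i j k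
  exact sum_diagMul (fun a b c => (↑g⁻¹ : Matrix (Fin n) (Fin n) ℂ) a i *
      (↑g⁻¹ : Matrix (Fin n) (Fin n) ℂ) b j * (↑g : Matrix (Fin n) (Fin n) ℂ) k c)

lemma rankLE_mono {n₁ n₂ n₃ : ℕ} {T : Fin n₁ → Fin n₂ → Fin n₃ → ℂ} {r r' : ℕ}
    (h : r ≤ r') (hT : rankLE T r) : rankLE T r' := by
  obtain ⟨u, v, w, rfl⟩ := hT
  refine ⟨fun s => if hs : (s : ℕ) < r then u ⟨s, hs⟩ else 0,
    fun s => if hs : (s : ℕ) < r then v ⟨s, hs⟩ else 0,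
    fun s => if hs : (s : ℕ) < r then w ⟨s, hs⟩ else 0, ?_⟩
  funext i j k
  have h1 : ∀ s : Fin r',
      (if hs : (s : ℕ) < r then u ⟨s, hs⟩ else 0) i *
      (if hs : (s : ℕ) < r then v ⟨s, hs⟩ else 0) j *
      (if hs : (s : ℕ) < r then w ⟨s, hs⟩ else 0) k =
      (if hs : (s : ℕ) < r then u ⟨s, hs⟩ i * v ⟨s, hs⟩ j * w ⟨s, hs⟩ k else 0) := by
    intro s; by_cases hs : (s : ℕ) < r <;> simp [hs]
  rw [Finset.sum_congr rfl (fun s _ => h1 s)]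
  rw [Fin.sum_univ_eq_sum_range
    (fun s => if hs : s < r then u ⟨s, hs⟩ i * v ⟨s, hs⟩ j * w ⟨s, hs⟩ k else 0)]
  rw [← Finset.sum_subset (Finset.range_subset_range.2 h)
    (fun x _ hx => dif_neg (by simpa using hx))]
  rw [← Fin.sum_univ_eq_sum_range (fun s : ℕ => if hs : s < r then
      u ⟨s, hs⟩ i * v ⟨s, hs⟩ j * w ⟨s, hs⟩ k else 0)]
  exact (Finset.sum_congr rfl fun s _ => by rw [dif_pos s.isLt]).symm

lemma rankLE_self (T : Fin n → Fin n → Fin n → ℂ) :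
    rankLE T (Fintype.card (Fin n × Fin n × Fin n)) := by
  classical
  let eqv := Fintype.equivFin (Fin n × Fin n × Fin n)
  refine ⟨fun s i => if i = (eqv.symm s).1 then 1 else 0,
    fun s j => if j = (eqv.symm s).2.1 then 1 else 0,
    fun s k => if k = (eqv.symm s).2.2 then T (eqv.symm s).1 (eqv.symm s).2.1 (eqv.symm s).2.2
      else 0, ?_⟩
  funext i j k
  rw [← Equiv.sum_comp eqv]
  simp only [Equiv.symm_apply_apply]
  rw [Fintype.sum_prod_type]
  simp [Fintype.sum_prod_type, ite_and, mul_ite, mul_one, mul_zero, Finset.sum_ite_eq,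
    Finset.sum_ite_eq', eq_comm]

def Gset (n : ℕ) : Set (Fin n → Fin n → Fin n → ℂ) :=
  {S | ∃ A B C : Matrix (Fin n) (Fin n) ℂ, IsUnit A ∧ IsUnit B ∧ IsUnit C ∧
    S = fun i j k => ∑ c, A c i * B c j * C k c}

lemma aux_isUnit (M : Matrix (Fin n) (Fin n) ℂ) {t : ℂ}
    (ht : t ∉ spectrum ℂ (-M)) : IsUnit (M + t • (1 : Matrix (Fin n) (Fin n) ℂ)) := by
  have := spectrum.notMem_iff.mp ht
  convert this using 1
  ext i j
  simp [Matrix.algebraMap_matrix_apply, Matrix.one_apply, Matrix.add_apply, Matrix.smul_apply,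
    smul_eq_mul, mul_ite, mul_one, mul_zero, sub_neg_eq_add, add_comm]

lemma rank_subset_closure_Gset :
    {S : Fin n → Fin n → Fin n → ℂ | rankLE S n} ⊆ closure (Gset n) := by
  rintro S ⟨u, v, w, rfl⟩
  set t : ℕ → ℂ := fun m => (((1 : ℝ) / (m + 1) : ℝ) : ℂ) with ht
  have htinj : Function.Injective t := by
    intro a b hab
    rw [ht] at hab
    have h2 : ((1 : ℝ) / ((a : ℝ) + 1)) = ((1 : ℝ) / ((b : ℝ) + 1)) :=
      Complex.ofReal_inj.mp hab
    rw [div_eq_div_iff (by positivity) (by positivity)] at h2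
    simp only [one_mul] at h2
    have : (a : ℝ) = b := by linarith
    exact_mod_cast this
  have httend : Filter.Tendsto t Filter.atTop (nhds 0) := by
    have h1 : Filter.Tendsto (fun m : ℕ => (1 : ℝ) / (m + 1)) Filter.atTop (nhds 0) :=
      tendsto_one_div_add_atTop_nhds_zero_nat
    have h2 : Filter.Tendsto (fun m : ℕ => (((1 : ℝ) / (m + 1) : ℝ) : ℂ)) Filter.atTop
        (nhds (((0 : ℝ) : ℂ))) := (Complex.continuous_ofReal.tendsto 0).comp h1
    rw [ht]
    simpa using h2
  set F : ℂ → (Fin n → Fin n → Fin n → ℂ) := fun z i j k =>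
    ∑ c, (u c i + z * (1 : Matrix (Fin n) (Fin n) ℂ) c i) *
      (v c j + z * (1 : Matrix (Fin n) (Fin n) ℂ) c j) *
      (w c k + z * (1 : Matrix (Fin n) (Fin n) ℂ) k c) with hF
  have hFcont : Continuous F := by
    refine continuous_pi fun i => continuous_pi fun j => continuous_pi fun k => ?_
    exact continuous_finset_sum _ fun c _ =>
      (((continuous_const.add (continuous_id.mul continuous_const)).mul
        (continuous_const.add (continuous_id.mul continuous_const))).mul
        (continuous_const.add (continuous_id.mul continuous_const)))
  have hF0 : F 0 = fun i j k => ∑ s, u s i * v s j * w s k := by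
    funext i j k; simp [hF]
  set bad : Set ℂ := spectrum ℂ (-(Matrix.of u)) ∪ spectrum ℂ (-(Matrix.of v)) ∪
    spectrum ℂ (-((Matrix.of w)ᵀ)) with hbad
  have hbadfin : bad.Finite :=
    ((Matrix.finite_spectrum _).union (Matrix.finite_spectrum _)).union (Matrix.finite_spectrum _)
  have hev : ∀ᶠ m in Filter.atTop, t m ∉ bad := by
    rw [← Nat.cofinite_eq_atTop]
    exact (hbadfin.preimage htinj.injOn).eventually_cofinite_notMem
  have hgood : ∀ᶠ m in Filter.atTop, F (t m) ∈ Gset n := by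
    filter_upwards [hev] with m hm
    rw [hbad] at hm
    simp only [Set.mem_union, not_or] at hm
    refine ⟨Matrix.of u + t m • 1, Matrix.of v + t m • 1, (Matrix.of w)ᵀ + t m • 1,
      aux_isUnit _ hm.1.1, aux_isUnit _ hm.1.2, aux_isUnit _ hm.2, ?_⟩
    funext i j k
    simp only [hF, Matrix.add_apply, Matrix.smul_apply, smul_eq_mul, Matrix.transpose_apply,
      Matrix.of_apply]
  have htend : Filter.Tendsto (fun m => F (t m)) Filter.atTop (nhds (F 0)) :=
    (hFcont.tendsto 0).comp httend
  rw [hF0] at htend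
  exact mem_closure_of_tendsto htend hgood

lemma unital_L {φ : Fin n → Fin n → Fin n → ℂ} {e : Fin n → ℂ}
    (he : ∀ x, mulOf φ e x = x) :
    (Matrix.of fun k j => ∑ i, φ i j k * e i) = (1 : Matrix (Fin n) (Fin n) ℂ) := by
  ext k j
  have h := congrFun (he (Pi.single j 1)) k
  simp only [mulOf, Pi.single_apply, mul_ite, mul_one, mul_zero, Finset.sum_ite_eq,
    Finset.sum_ite_eq', Finset.mem_univ, if_true] at h
  simp only [Matrix.of_apply, Matrix.one_apply]
  rw [h]

lemma unital_R {φ : Fin n → Fin n → Fin n → ℂ} {e : Fin n → ℂ}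
    (he : ∀ x, mulOf φ x e = x) :
    (Matrix.of fun k i => ∑ j, φ i j k * e j) = (1 : Matrix (Fin n) (Fin n) ℂ) := by
  ext k i
  have h := congrFun (he (Pi.single i 1)) k
  simp only [mulOf, Pi.single_apply, mul_ite, ite_mul, mul_one, mul_zero, zero_mul, one_mul] at h
  rw [Finset.sum_comm] at h
  simp only [Finset.sum_ite_eq', Finset.mem_univ, if_true] at h
  simp only [Matrix.of_apply, Matrix.one_apply]
  rw [h]

lemma key_mem (A B C L R : Matrix (Fin n) (Fin n) ℂ) (T : Fin n → Fin n → Fin n → ℂ)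
    (e : Fin n → ℂ)
    (hA : IsUnit A) (hB : IsUnit B) (hC : IsUnit C)
    (hT : T = fun i j k => ∑ c, A c i * B c j * C k c)
    (hL : L = Matrix.of fun k j => ∑ i, T i j k * e i)
    (hR : R = Matrix.of fun k i => ∑ j, T i j k * e j)
    (hLu : IsUnit L.det) (hRu : IsUnit R.det) :
    (fun i j k => ∑ i₀, ∑ j₀, T i₀ j₀ k * R⁻¹ i₀ i * L⁻¹ j₀ j) ∈ BilOrbit (diagMul n) := by
  classical
  set α : Fin n → ℂ := fun c => ∑ i, A c i * e i with hα'
  set β : Fin n → ℂ := fun c => ∑ j, B c j * e j with hβ'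
  have hCdet : IsUnit C.det := (Matrix.isUnit_iff_isUnit_det C).mp hC
  have step1 : L = C * (Matrix.diagonal α * B) := by
    rw [hL, hT]
    ext k j
    rw [Matrix.mul_apply]
    simp only [Matrix.diagonal_mul, Matrix.of_apply, hα']
    simp only [Finset.sum_mul, Finset.mul_sum]
    rw [Finset.sum_comm]
    exact Finset.sum_congr rfl fun c _ => Finset.sum_congr rfl fun i _ => by ring
  have step2 : R = C * (Matrix.diagonal β * A) := by
    rw [hR, hT]
    ext k i
    rw [Matrix.mul_apply]
    simp only [Matrix.diagonal_mul, Matrix.of_apply, hβ']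
    simp only [Finset.sum_mul, Finset.mul_sum]
    rw [Finset.sum_comm]
    exact Finset.sum_congr rfl fun c _ => Finset.sum_congr rfl fun j _ => by ring
  have hα : ∀ c, α c ≠ 0 := by
    intro c hc
    have h0 : (Matrix.diagonal α).det = 0 := by
      rw [Matrix.det_diagonal]; exact Finset.prod_eq_zero (Finset.mem_univ c) hc
    have h := hLu
    rw [step1, Matrix.det_mul, Matrix.det_mul, h0, zero_mul, mul_zero] at h
    exact h.ne_zero rfl
  have hβ : ∀ c, β c ≠ 0 := by
    intro c hc
    have h0 : (Matrix.diagonal β).det = 0 := by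
      rw [Matrix.det_diagonal]; exact Finset.prod_eq_zero (Finset.mem_univ c) hc
    have h := hRu
    rw [step2, Matrix.det_mul, Matrix.det_mul, h0, zero_mul, mul_zero] at h
    exact h.ne_zero rfl
  set D1 : Matrix (Fin n) (Fin n) ℂ := Matrix.diagonal α with hD1'
  set D2 : Matrix (Fin n) (Fin n) ℂ := Matrix.diagonal β with hD2'
  set D1i : Matrix (Fin n) (Fin n) ℂ := Matrix.diagonal (fun c => (α c)⁻¹) with hD1i'
  set D2i : Matrix (Fin n) (Fin n) ℂ := Matrix.diagonal (fun c => (β c)⁻¹) with hD2i'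
  have hD1 : D1 * D1i = 1 := by
    rw [hD1', hD1i', Matrix.diagonal_mul_diagonal,
      show (fun c => α c * (α c)⁻¹) = fun _ => (1 : ℂ) from funext fun c => mul_inv_cancel₀ (hα c),
      Matrix.diagonal_one]
  have hD1i : D1i * D1 = 1 := by
    rw [hD1', hD1i', Matrix.diagonal_mul_diagonal,
      show (fun c => (α c)⁻¹ * α c) = fun _ => (1 : ℂ) from funext fun c => inv_mul_cancel₀ (hα c),
      Matrix.diagonal_one]
  have hD2 : D2 * D2i = 1 := by
    rw [hD2', hD2i', Matrix.diagonal_mul_diagonal,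
      show (fun c => β c * (β c)⁻¹) = fun _ => (1 : ℂ) from funext fun c => mul_inv_cancel₀ (hβ c),
      Matrix.diagonal_one]
  have hD2i : D2i * D2 = 1 := by
    rw [hD2', hD2i', Matrix.diagonal_mul_diagonal,
      show (fun c => (β c)⁻¹ * β c) = fun _ => (1 : ℂ) from funext fun c => inv_mul_cancel₀ (hβ c),
      Matrix.diagonal_one]
  have hCC : C * C⁻¹ = 1 := Matrix.mul_nonsing_inv C hCdet
  have hCC' : C⁻¹ * C = 1 := Matrix.nonsing_inv_mul C hCdet
  set g : Matrix (Fin n) (Fin n) ℂ := C * D1 * D2 with hg'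
  set ginv : Matrix (Fin n) (Fin n) ℂ := D2i * (D1i * C⁻¹) with hginv'
  have hgg : g * ginv = 1 := by
    rw [hg', hginv']
    simp only [Matrix.mul_assoc]
    rw [← Matrix.mul_assoc D2 D2i, hD2, Matrix.one_mul, ← Matrix.mul_assoc D1 D1i, hD1,
      Matrix.one_mul, hCC]
  have hgg' : ginv * g = 1 := by
    rw [hg', hginv']
    simp only [Matrix.mul_assoc]
    rw [← Matrix.mul_assoc C⁻¹ C, hCC', Matrix.one_mul, ← Matrix.mul_assoc D1i D1, hD1i,
      Matrix.one_mul, hD2i]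
  refine ⟨⟨g, ginv, hgg, hgg'⟩, ?_⟩
  have hcoe : (↑(⟨g, ginv, hgg, hgg'⟩ : GL (Fin n) ℂ)⁻¹ : Matrix (Fin n) (Fin n) ℂ) = ginv := rfl
  have hcoe2 : (↑(⟨g, ginv, hgg, hgg'⟩ : GL (Fin n) ℂ) : Matrix (Fin n) (Fin n) ℂ) = g := rfl
  funext i j k
  rw [hcoe, hcoe2, sum_diagMul (fun a b c => ginv a i * ginv b j * g k c)]
  -- matrix identities for the two inverse factors
  have hRdet : IsUnit R.det := hRu
  have hLdet : IsUnit L.det := hLu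
  have hAR : A * R⁻¹ = D2i * C⁻¹ := by
    have h2 : A = D2i * (C⁻¹ * R) := by
      rw [step2, ← Matrix.mul_assoc C⁻¹ C (D2 * A), hCC', Matrix.one_mul,
        ← Matrix.mul_assoc D2i D2 A, hD2i, Matrix.one_mul]
    rw [h2]
    simp only [Matrix.mul_assoc]
    rw [Matrix.mul_nonsing_inv R hRdet, Matrix.mul_one]
  have hBL : B * L⁻¹ = D1i * C⁻¹ := by
    have h2 : B = D1i * (C⁻¹ * L) := by
      rw [step1, ← Matrix.mul_assoc C⁻¹ C (D1 * B), hCC', Matrix.one_mul,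
        ← Matrix.mul_assoc D1i D1 B, hD1i, Matrix.one_mul]
    rw [h2]
    simp only [Matrix.mul_assoc]
    rw [Matrix.mul_nonsing_inv L hLdet, Matrix.mul_one]
  have hR' : ∀ c i, (∑ i₀, A c i₀ * R⁻¹ i₀ i) = (β c)⁻¹ * C⁻¹ c i := by
    intro c i
    have h := hAR
    rw [← Matrix.ext_iff] at h
    have h2 := h c i
    simpa [Matrix.mul_apply, Matrix.diagonal_apply, ite_mul, zero_mul, mul_ite, mul_zero,
      Finset.sum_ite_eq, Finset.sum_ite_eq', hD2i'] using h2
  have hL' : ∀ c j, (∑ j₀, B c j₀ * L⁻¹ j₀ j) = (α c)⁻¹ * C⁻¹ c j := by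
    intro c j
    have h := hBL
    rw [← Matrix.ext_iff] at h
    have h2 := h c j
    simpa [Matrix.mul_apply, Matrix.diagonal_apply, ite_mul, zero_mul, mul_ite, mul_zero,
      Finset.sum_ite_eq, Finset.sum_ite_eq', hD1i'] using h2
  have hginvE : ∀ c i, ginv c i = (β c)⁻¹ * ((α c)⁻¹ * C⁻¹ c i) := by
    intro c i
    rw [hginv', hD2i', hD1i']
    simp [Matrix.mul_apply, Matrix.diagonal_apply, ite_mul, zero_mul, mul_ite, mul_zero,
      Finset.sum_ite_eq, Finset.sum_ite_eq']
  have hgE : ∀ k c, g k c = C k c * α c * β c := by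
    intro k c
    rw [hg', hD1', hD2']
    simp [Matrix.mul_apply, Matrix.diagonal_apply, ite_mul, zero_mul, mul_ite, mul_zero,
      Finset.sum_ite_eq, Finset.sum_ite_eq']
  rw [hT]
  simp only [Finset.sum_mul]
  have swap1 : ∀ (f : Fin n → Fin n → Fin n → ℂ),
      (∑ i₀, ∑ j₀, ∑ c, f i₀ j₀ c) = ∑ c, ∑ i₀, ∑ j₀, f i₀ j₀ c := by
    intro f
    calc (∑ i₀, ∑ j₀, ∑ c, f i₀ j₀ c)
        = ∑ i₀, ∑ c, ∑ j₀, f i₀ j₀ c :=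
          Finset.sum_congr rfl fun i₀ _ => by rw [Finset.sum_comm]
      _ = ∑ c, ∑ i₀, ∑ j₀, f i₀ j₀ c := by rw [Finset.sum_comm]
  rw [swap1 (fun i₀ j₀ c => A c i₀ * B c j₀ * C k c * R⁻¹ i₀ i * L⁻¹ j₀ j)]
  refine Finset.sum_congr rfl fun c _ => ?_
  have e1 : (∑ i₀, A c i₀ * R⁻¹ i₀ i) * (∑ j₀, B c j₀ * L⁻¹ j₀ j) * C k c =
      ∑ i₀, ∑ j₀, A c i₀ * B c j₀ * C k c * R⁻¹ i₀ i * L⁻¹ j₀ j := by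
    rw [Finset.sum_mul_sum]
    rw [Finset.sum_mul]
    refine Finset.sum_congr rfl fun i₀ _ => ?_
    rw [Finset.sum_mul]
    exact Finset.sum_congr rfl fun j₀ _ => by ring
  rw [← e1, hR' c i, hL' c j, hginvE c i, hginvE c j, hgE k c]
  field_simp [hα c, hβ c]

lemma hard_direction {φ : Fin n → Fin n → Fin n → ℂ} (e : Fin n → ℂ)
    (heL : ∀ x, mulOf φ e x = x) (heR : ∀ x, mulOf φ x e = x)
    (hcl : φ ∈ closure (Gset n)) : φ ∈ closure (BilOrbit (diagMul n)) := by
  classical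
  obtain ⟨T, hTmem, hTlim⟩ := mem_closure_iff_seq_limit.mp hcl
  choose A B C hA hB hC hT using hTmem
  set L : ℕ → Matrix (Fin n) (Fin n) ℂ :=
    fun m => Matrix.of fun k j => ∑ i, T m i j k * e i with hLdef
  set R : ℕ → Matrix (Fin n) (Fin n) ℂ :=
    fun m => Matrix.of fun k i => ∑ j, T m i j k * e j with hRdef
  have hcontL : Continuous (fun S : (Fin n → Fin n → Fin n → ℂ) =>
      (Matrix.of fun k j => ∑ i, S i j k * e i : Matrix (Fin n) (Fin n) ℂ)) := by
    refine continuous_pi fun k => continuous_pi fun j => ?_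
    simp only [Matrix.of_apply]
    refine continuous_finset_sum _ fun i _ => ?_
    fun_prop
  have hcontR : Continuous (fun S : (Fin n → Fin n → Fin n → ℂ) =>
      (Matrix.of fun k i => ∑ j, S i j k * e j : Matrix (Fin n) (Fin n) ℂ)) := by
    refine continuous_pi fun k => continuous_pi fun i => ?_
    simp only [Matrix.of_apply]
    refine continuous_finset_sum _ fun j _ => ?_
    fun_prop
  have hLlim : Filter.Tendsto L Filter.atTop (nhds 1) := by
    have h1 := (hcontL.tendsto φ).comp hTlim
    rw [unital_L heL] at h1
    exact h1
  have hRlim : Filter.Tendsto R Filter.atTop (nhds 1) := by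
    have h1 := (hcontR.tendsto φ).comp hTlim
    rw [unital_R heR] at h1
    exact h1
  have hinvcont : ContinuousAt Inv.inv (1 : Matrix (Fin n) (Fin n) ℂ) := by
    refine continuousAt_matrix_inv 1 ?_
    rw [Matrix.det_one, Ring.inverse_eq_inv']
    exact continuousAt_inv₀ one_ne_zero
  have hLinv : Filter.Tendsto (fun m => (L m)⁻¹) Filter.atTop (nhds 1) := by
    have h1 := hinvcont.tendsto.comp hLlim
    simpa [Function.comp_def] using h1
  have hRinv : Filter.Tendsto (fun m => (R m)⁻¹) Filter.atTop (nhds 1) := by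
    have h1 := hinvcont.tendsto.comp hRlim
    simpa [Function.comp_def] using h1
  have hdetcont : Continuous (fun M : Matrix (Fin n) (Fin n) ℂ => M.det) :=
    continuous_id.matrix_det
  have hLdetlim : Filter.Tendsto (fun m => (L m).det) Filter.atTop (nhds 1) := by
    have h1 := (hdetcont.tendsto 1).comp hLlim
    simpa [Function.comp_def] using h1
  have hRdetlim : Filter.Tendsto (fun m => (R m).det) Filter.atTop (nhds 1) := by
    have h1 := (hdetcont.tendsto 1).comp hRlim
    simpa [Function.comp_def] using h1
  have hLunit : ∀ᶠ m in Filter.atTop, IsUnit (L m).det := by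
    filter_upwards [hLdetlim.eventually_ne one_ne_zero] with m hm
    exact isUnit_iff_ne_zero.mpr hm
  have hRunit : ∀ᶠ m in Filter.atTop, IsUnit (R m).det := by
    filter_upwards [hRdetlim.eventually_ne one_ne_zero] with m hm
    exact isUnit_iff_ne_zero.mpr hm
  set Q : ℕ → (Fin n → Fin n → Fin n → ℂ) :=
    fun m i j k => ∑ i₀, ∑ j₀, T m i₀ j₀ k * (R m)⁻¹ i₀ i * (L m)⁻¹ j₀ j with hQdef
  have hQmem : ∀ᶠ m in Filter.atTop, Q m ∈ BilOrbit (diagMul n) := by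
    filter_upwards [hLunit, hRunit] with m h1 h2
    exact key_mem (A m) (B m) (C m) (L m) (R m) (T m) e (hA m) (hB m) (hC m) (hT m) rfl rfl h1 h2
  have hQlim : Filter.Tendsto Q Filter.atTop (nhds φ) := by
    set Φ : (Fin n → Fin n → Fin n → ℂ) ×
        (Matrix (Fin n) (Fin n) ℂ × Matrix (Fin n) (Fin n) ℂ) → (Fin n → Fin n → Fin n → ℂ) :=
      fun p i j k => ∑ i₀, ∑ j₀, p.1 i₀ j₀ k * p.2.1 i₀ i * p.2.2 j₀ j with hΦdef
    have hΦ : Continuous Φ := by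
      refine continuous_pi fun i => continuous_pi fun j => continuous_pi fun k => ?_
      refine continuous_finset_sum _ fun i₀ _ => continuous_finset_sum _ fun j₀ _ => ?_
      have c1 : Continuous fun p : (Fin n → Fin n → Fin n → ℂ) ×
          (Matrix (Fin n) (Fin n) ℂ × Matrix (Fin n) (Fin n) ℂ) => p.1 i₀ j₀ k :=
        (continuous_apply k).comp ((continuous_apply j₀).comp
          ((continuous_apply i₀).comp continuous_fst))
      have c2 : Continuous fun p : (Fin n → Fin n → Fin n → ℂ) ×
          (Matrix (Fin n) (Fin n) ℂ × Matrix (Fin n) (Fin n) ℂ) => p.2.1 i₀ i :=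
        (continuous_apply i).comp ((continuous_apply i₀).comp
          (continuous_fst.comp continuous_snd))
      have c3 : Continuous fun p : (Fin n → Fin n → Fin n → ℂ) ×
          (Matrix (Fin n) (Fin n) ℂ × Matrix (Fin n) (Fin n) ℂ) => p.2.2 j₀ j :=
        (continuous_apply j).comp ((continuous_apply j₀).comp
          (continuous_snd.comp continuous_snd))
      exact (c1.mul c2).mul c3
    have hp : Filter.Tendsto (fun m => (T m, ((R m)⁻¹, (L m)⁻¹))) Filter.atTop
        (nhds (φ, ((1 : Matrix (Fin n) (Fin n) ℂ), (1 : Matrix (Fin n) (Fin n) ℂ)))) :=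
      hTlim.prodMk_nhds (hRinv.prodMk_nhds hLinv)
    have h1 := (hΦ.tendsto _).comp hp
    have h2 : Φ (φ, (1, 1)) = φ := by
      funext i j k
      rw [hΦdef]
      simp only [Matrix.one_apply, mul_ite, ite_mul, zero_mul, mul_zero, mul_one,
        Finset.sum_ite_eq, Finset.sum_ite_eq', Finset.mem_univ, if_true]
    rw [h2] at h1
    exact h1
  exact mem_closure_of_tendsto hQlim hQmem

end Stmt1Aux

/-- a unital bilinear map on `ℂⁿ` has border rank at most `n` iff
it is smoothable, i.e. lies in the closure of the `GL(ℂⁿ)`-orbit of the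
coordinatewise multiplication of `ℂⁿ`. -/
theorem stmt1 {n : ℕ} (hn : 1 ≤ n) (φ : Fin n → Fin n → Fin n → ℂ)
    (hφ_unital : IsUnitalBil φ) :
    bRank φ ≤ n ↔ φ ∈ closure (BilOrbit (diagMul n)) := by

  constructor
  · intro h
    obtain ⟨e, he⟩ := hφ_unital
    have hne : {r | φ ∈ closure {S | rankLE S r}}.Nonempty :=
      ⟨_, subset_closure (Stmt1Aux.rankLE_self φ)⟩
    have hmem : φ ∈ closure {S | rankLE S (bRank φ)} := Nat.sInf_mem hne
    have h1 : φ ∈ closure {S | rankLE S n} :=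
      closure_mono (fun S hS => Stmt1Aux.rankLE_mono h hS) hmem
    have h2 : φ ∈ closure (Stmt1Aux.Gset n) :=
      (closure_minimal Stmt1Aux.rank_subset_closure_Gset isClosed_closure) h1
    exact Stmt1Aux.hard_direction e (fun x => (he x).1) (fun x => (he x).2) h2
  · intro h
    apply Nat.sInf_le
    exact closure_mono Stmt1Aux.orbit_subset_rank h
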